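/- Let (Ω, μ) be a probability space and X, Y, Z : Ω → ℝ measurable random variables such that the joint law of (X, Y, Z) has density (x₀, x, x_f) ↦ ρ₀(x₀) q₁(x₀, x) q₂(x, x_f) with respect to Lebesgue measure on ℝ³, where ρ₀ : ℝ → [0,∞) and q₁, q₂ : ℝ × ℝ → [0,∞) are measurable, and set q(x₀, x_f) = ∫ q₁(x₀, y) q₂(y, x_f) dy. Then for almost every (x₀, x_f) with respect to the law of (X, Z), one has 0 < q(x₀, x_f) < ∞ and the conditional distribution of Y given (X, Z) = (x₀, x_f) is the probability measure on ℝ with Lebesgue density x ↦ q₂(x, x_f) q₁(x₀, x) / q(x₀, x_f). (This is the bridge density 𝒫_A(x, t) = Q(x_f, t_f | x, t) Q(x, t | x₀, 0) / Q(x_f, t_f | x₀, 0) used to define the maximum likelihood transition path.) -/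

import Mathlib

open MeasureTheory ProbabilityTheory
open scoped ENNReal

private lemma lintegral_triple' (F : ℝ × ℝ × ℝ → ℝ≥0∞) (hF : Measurable F) :
    ∫⁻ r, F r = ∫⁻ x₀, ∫⁻ x, ∫⁻ xf, F (x₀, x, xf) := by
  rw [Measure.volume_eq_prod, lintegral_prod _ hF.aemeasurable]
  refine lintegral_congr fun x₀ => ?_
  rw [Measure.volume_eq_prod,
    lintegral_prod (fun y => F (x₀, y)) ((hF.comp measurable_prodMk_left).aemeasurable)]

private lemma lintegral_pair' (F : ℝ × ℝ → ℝ≥0∞) (hF : Measurable F) :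
    ∫⁻ p, F p = ∫⁻ x₀, ∫⁻ xf, F (x₀, xf) := by
  rw [Measure.volume_eq_prod, lintegral_prod _ hF.aemeasurable]

/-- Bridge density: if the joint law of `(X, Y, Z)` has the Markov factorized density
`(x₀, x, x_f) ↦ ρ₀ x₀ * q₁ (x₀, x) * q₂ (x, x_f)` with respect to Lebesgue measure on `ℝ³`,
and `q (x₀, x_f) = ∫ q₁ (x₀, y) * q₂ (y, x_f) dy`, then for `(law of (X, Z))`-almost every
`(x₀, x_f)` one has `0 < q (x₀, x_f) < ∞` and the conditional distribution of the midpoint `Y`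
given `(X, Z) = (x₀, x_f)` has Lebesgue density
`x ↦ q₂ (x, x_f) * q₁ (x₀, x) / q (x₀, x_f)`. -/
theorem condDistrib_bridge_density
    {Ω : Type*} [MeasurableSpace Ω] (μ : Measure Ω) [IsProbabilityMeasure μ]
    (X Y Z : Ω → ℝ) (hX : Measurable X) (hY : Measurable Y) (hZ : Measurable Z)
    (ρ₀ : ℝ → ℝ≥0∞) (q₁ q₂ : ℝ × ℝ → ℝ≥0∞)
    (hρ₀ : Measurable ρ₀) (hq₁ : Measurable q₁) (hq₂ : Measurable q₂)
    (hlaw : μ.map (fun ω => (X ω, Y ω, Z ω)) =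
      volume.withDensity (fun p : ℝ × ℝ × ℝ => ρ₀ p.1 * q₁ (p.1, p.2.1) * q₂ (p.2.1, p.2.2)))
    (q : ℝ × ℝ → ℝ≥0∞)
    (hq : ∀ p : ℝ × ℝ, q p = ∫⁻ y, q₁ (p.1, y) * q₂ (y, p.2)) :
    ∀ᵐ p ∂(μ.map (fun ω => (X ω, Z ω))),
      0 < q p ∧ q p < ∞ ∧
      condDistrib Y (fun ω => (X ω, Z ω)) μ p =
        volume.withDensity (fun x => q₂ (x, p.2) * q₁ (p.1, x) / q p) := by
  have hXZ : Measurable fun ω => (X ω, Z ω) := hX.prodMk hZ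
  have hXYZ : Measurable fun ω => (X ω, Y ω, Z ω) := hX.prodMk (hY.prodMk hZ)
  have hπ : Measurable fun r : ℝ × ℝ × ℝ => (r.1, r.2.2) :=
    measurable_fst.prodMk measurable_snd.snd
  have hT : Measurable fun r : ℝ × ℝ × ℝ => ((r.1, r.2.2), r.2.1) :=
    hπ.prodMk measurable_snd.fst
  have hf : Measurable (fun r : ℝ × ℝ × ℝ => ρ₀ r.1 * q₁ (r.1, r.2.1) * q₂ (r.2.1, r.2.2)) :=
    ((hρ₀.comp measurable_fst).mul
      (hq₁.comp (measurable_fst.prodMk measurable_snd.fst))).mul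
      (hq₂.comp (measurable_snd.fst.prodMk measurable_snd.snd))
  have hqm : Measurable q := by
    have h : Measurable fun p : ℝ × ℝ => ∫⁻ y, q₁ (p.1, y) * q₂ (y, p.2) :=
      Measurable.lintegral_prod_right'
        (f := fun z : (ℝ × ℝ) × ℝ => q₁ (z.1.1, z.2) * q₂ (z.2, z.1.2))
        ((hq₁.comp (measurable_fst.fst.prodMk measurable_snd)).mul
          (hq₂.comp (measurable_snd.prodMk measurable_fst.snd)))
    have : (fun p : ℝ × ℝ => ∫⁻ y, q₁ (p.1, y) * q₂ (y, p.2)) = q := funext fun p => (hq p).symm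
    rwa [this] at h
  set g : ℝ × ℝ → ℝ≥0∞ := fun p => ρ₀ p.1 * q p with hg
  have hgm : Measurable g := (hρ₀.comp measurable_fst).mul hqm
  -- Step A: the law of (X, Z)
  have hν : μ.map (fun ω => (X ω, Z ω)) = volume.withDensity g := by
    have hmap : μ.map (fun ω => (X ω, Z ω)) =
        (μ.map fun ω => (X ω, Y ω, Z ω)).map (fun r => (r.1, r.2.2)) := by
      rw [Measure.map_map hπ hXYZ]; rfl
    rw [hmap, hlaw]
    ext B hB
    rw [Measure.map_apply hπ hB, withDensity_apply _ (hπ hB), withDensity_apply _ hB,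
      ← lintegral_indicator (hπ hB), ← lintegral_indicator hB,
      lintegral_triple' _ ((hf.indicator (hπ hB))), lintegral_pair' _ (hgm.indicator hB)]
    refine lintegral_congr fun x₀ => ?_
    have step1 : ∀ x xf : ℝ,
        ((fun r : ℝ × ℝ × ℝ => (r.1, r.2.2)) ⁻¹' B).indicator
          (fun r : ℝ × ℝ × ℝ => ρ₀ r.1 * q₁ (r.1, r.2.1) * q₂ (r.2.1, r.2.2)) (x₀, x, xf)
        = (B.indicator (1 : ℝ × ℝ → ℝ≥0∞) (x₀, xf) * ρ₀ x₀) * (q₁ (x₀, x) * q₂ (x, xf)) := by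
      intro x xf
      by_cases h : (x₀, xf) ∈ B
      · simp [Set.indicator_apply, h, mul_assoc, mul_comm, mul_left_comm]
      · simp [Set.indicator_apply, h]
    calc ∫⁻ x, ∫⁻ xf,
        ((fun r : ℝ × ℝ × ℝ => (r.1, r.2.2)) ⁻¹' B).indicator
          (fun r : ℝ × ℝ × ℝ => ρ₀ r.1 * q₁ (r.1, r.2.1) * q₂ (r.2.1, r.2.2)) (x₀, x, xf)
        = ∫⁻ x, ∫⁻ xf, (B.indicator 1 (x₀, xf) * ρ₀ x₀) * (q₁ (x₀, x) * q₂ (x, xf)) := by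
          refine lintegral_congr fun x => lintegral_congr fun xf => step1 x xf
      _ = ∫⁻ xf, ∫⁻ x, (B.indicator 1 (x₀, xf) * ρ₀ x₀) * (q₁ (x₀, x) * q₂ (x, xf)) := by
          refine lintegral_lintegral_swap ?_
          exact ((((measurable_one.indicator hB).comp
            (measurable_const.prodMk measurable_snd)).mul measurable_const).mul
            ((hq₁.comp (measurable_const.prodMk measurable_fst)).mul
              (hq₂.comp (measurable_fst.prodMk measurable_snd)))).aemeasurable
      _ = ∫⁻ xf, B.indicator g (x₀, xf) := by
          refine lintegral_congr fun xf => ?_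
          have hm : Measurable fun x : ℝ => q₁ (x₀, x) * q₂ (x, xf) := by
            exact (hq₁.comp (measurable_const.prodMk measurable_id)).mul
              (hq₂.comp (measurable_id.prodMk measurable_const))
          rw [lintegral_const_mul _ hm]
          by_cases h : (x₀, xf) ∈ B
          · simp [Set.indicator_apply, h, hg, hq (x₀, xf)]
          · simp [Set.indicator_apply, h]
  haveI : IsProbabilityMeasure (μ.map fun ω => (X ω, Z ω)) :=
    Measure.isProbabilityMeasure_map hXZ.aemeasurable
  have hgfin : ∀ᵐ p : ℝ × ℝ ∂volume, g p < ∞ := by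
    refine ae_lt_top hgm ?_
    have h1 : ∫⁻ p, g p ∂volume = 1 := by
      have := measure_univ (μ := μ.map fun ω => (X ω, Z ω))
      rwa [hν, withDensity_apply _ MeasurableSet.univ, setLIntegral_univ] at this
    simp [h1]
  set s : Set (ℝ × ℝ) := {p | 0 < q p ∧ q p < ∞} with hs_def
  have hs : MeasurableSet s := by
    rw [hs_def, Set.setOf_and]
    exact (measurableSet_lt measurable_const hqm).inter (measurableSet_lt hqm measurable_const)
  have h_ae_s : ∀ᵐ p ∂(μ.map fun ω => (X ω, Z ω)), p ∈ s := by
    rw [hν, ae_iff]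
    have hc : MeasurableSet {p : ℝ × ℝ | ¬ p ∈ s} := hs.compl
    rw [withDensity_apply _ hc]
    refine (setLIntegral_eq_zero_iff hc hgm).mpr ?_
    have hae : ∀ᵐ x : ℝ × ℝ ∂volume, x ∈ {p : ℝ × ℝ | ¬ p ∈ s} → g x = 0 := by
      filter_upwards [hgfin] with p hp hpc
      rcases eq_or_ne (q p) 0 with h0 | h0
      · simp [hg, h0]
      · have htop : q p = ∞ := by
          by_contra h
          exact hpc ⟨pos_iff_ne_zero.mpr h0, lt_top_iff_ne_top.mpr h⟩
        by_contra hne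
        have hρ : ρ₀ p.1 ≠ 0 := by
          intro h; exact hne (by simp [hg, h])
        rw [hg] at hp
        simp only [htop, ENNReal.mul_top hρ] at hp
        exact absurd hp (lt_irrefl _)
    exact hae
  -- the candidate kernel
  set dens : (ℝ × ℝ) → ℝ → ℝ≥0∞ := fun p x => q₂ (x, p.2) * q₁ (p.1, x) / q p with hdens
  have hdensm : Measurable (Function.uncurry dens) := by
    refine Measurable.div ?_ (hqm.comp measurable_fst)
    exact (hq₂.comp (measurable_snd.prodMk measurable_fst.snd)).mul
      (hq₁.comp (measurable_fst.fst.prodMk measurable_snd))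
  have hdensm' : ∀ p, Measurable (dens p) := fun p =>
    hdensm.comp measurable_prodMk_left
  set κ₁ : Kernel (ℝ × ℝ) ℝ := Kernel.withDensity (Kernel.const _ volume) dens with hκ₁
  set κ : Kernel (ℝ × ℝ) ℝ := Kernel.piecewise hs κ₁ (Kernel.const _ (Measure.dirac 0)) with hκ
  have hκ₁_apply : ∀ p, κ₁ p = volume.withDensity (dens p) := fun p => by
    rw [hκ₁, Kernel.withDensity_apply _ hdensm, Kernel.const_apply]
  have hκ_on_s : ∀ p ∈ s, κ p = volume.withDensity (dens p) := fun p hp => by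
    rw [hκ, Kernel.piecewise_apply, if_pos hp, hκ₁_apply]
  have hq12' : ∀ p : ℝ × ℝ, Measurable fun x => q₂ (x, p.2) * q₁ (p.1, x) := fun p =>
    (hq₂.comp (measurable_id.prodMk measurable_const)).mul
      (hq₁.comp (measurable_const.prodMk measurable_id))
  have hmass : ∀ p ∈ s, κ p Set.univ = 1 := by
    intro p hp
    rw [hκ_on_s p hp, withDensity_apply _ MeasurableSet.univ, setLIntegral_univ]
    have hint : ∫⁻ x, q₂ (x, p.2) * q₁ (p.1, x) = q p := by
      rw [hq]; exact lintegral_congr fun x => mul_comm _ _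
    simp only [hdens, div_eq_mul_inv]
    rw [lintegral_mul_const _ (hq12' p), hint, ENNReal.mul_inv_cancel hp.1.ne' hp.2.ne]
  haveI : IsFiniteKernel κ := by
    refine ⟨⟨1, ENNReal.one_lt_top, fun p => ?_⟩⟩
    rw [hκ, Kernel.piecewise_apply]
    split_ifs with h
    · rw [hκ₁_apply p, ← hκ_on_s p h]
      exact (hmass p h).le
    · simp
  -- Step B: the disintegration identity
  have hcomp : μ.map (fun ω => ((X ω, Z ω), Y ω)) = (μ.map fun ω => (X ω, Z ω)) ⊗ₘ κ := by
    ext A hA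
    have hmapT : μ.map (fun ω => ((X ω, Z ω), Y ω)) =
        (μ.map fun ω => (X ω, Y ω, Z ω)).map (fun r => ((r.1, r.2.2), r.2.1)) := by
      rw [Measure.map_map hT hXYZ]; rfl
    rw [hmapT, hlaw, Measure.map_apply hT hA, withDensity_apply _ (hT hA),
      Measure.compProd_apply hA, hν,
      lintegral_withDensity_eq_lintegral_mul volume hgm
        (Kernel.measurable_kernel_prodMk_left hA)]
    have key : ∀ᵐ p : ℝ × ℝ ∂volume,
        (g * fun p => κ p (Prod.mk p ⁻¹' A)) p
        = ρ₀ p.1 * ∫⁻ x, q₁ (p.1, x) * q₂ (x, p.2) * A.indicator 1 (p, x) := by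
      filter_upwards [hgfin] with p hp
      have hmeasx : Measurable fun x => q₁ (p.1, x) * q₂ (x, p.2) * A.indicator 1 (p, x) :=
        (((hq₁.comp (measurable_const.prodMk measurable_id)).mul
          (hq₂.comp (measurable_id.prodMk measurable_const))).mul
          ((measurable_one.indicator hA).comp measurable_prodMk_left))
      simp only [Pi.mul_apply]
      by_cases hps : p ∈ s
      · rw [hκ_on_s p hps, withDensity_apply _ (measurable_prodMk_left hA),
          ← lintegral_indicator (measurable_prodMk_left hA)]
        have hslice : ∫⁻ x, (Prod.mk p ⁻¹' A).indicator (dens p) x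
            = (∫⁻ x, q₁ (p.1, x) * q₂ (x, p.2) * A.indicator 1 (p, x)) * (q p)⁻¹ := by
          rw [← lintegral_mul_const _ hmeasx]
          refine lintegral_congr fun x => ?_
          by_cases hx : (p, x) ∈ A
          · simp [Set.indicator_apply, Set.mem_preimage, hx, hdens, div_eq_mul_inv,
              mul_comm, mul_left_comm]
          · simp [Set.indicator_apply, Set.mem_preimage, hx]
        rw [hslice, hg]
        have hcancel : q p * ((∫⁻ x, q₁ (p.1, x) * q₂ (x, p.2) * A.indicator 1 (p, x)) * (q p)⁻¹)
            = ∫⁻ x, q₁ (p.1, x) * q₂ (x, p.2) * A.indicator 1 (p, x) := by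
          rw [mul_comm _ ((q p)⁻¹), ← mul_assoc, ENNReal.mul_inv_cancel hps.1.ne' hps.2.ne,
            one_mul]
        rw [mul_assoc, hcancel]
      · have hI_le : ∫⁻ x, q₁ (p.1, x) * q₂ (x, p.2) * A.indicator 1 (p, x) ≤ q p := by
          rw [hq]
          refine lintegral_mono fun x => ?_
          by_cases hx : (p, x) ∈ A
          · simp [Set.indicator_apply, hx]
          · simp [Set.indicator_apply, hx]
        rcases eq_or_ne (q p) 0 with h0 | h0
        · have hI : ∫⁻ x, q₁ (p.1, x) * q₂ (x, p.2) * A.indicator 1 (p, x) = 0 :=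
            le_antisymm (h0 ▸ hI_le) zero_le
          simp [hg, h0, hI]
        · have htop : q p = ∞ := by
            by_contra h
            exact hps ⟨pos_iff_ne_zero.mpr h0, lt_top_iff_ne_top.mpr h⟩
          have hρ : ρ₀ p.1 = 0 := by
            by_contra hr
            rw [hg] at hp
            simp only [htop, ENNReal.mul_top hr] at hp
            exact absurd hp (lt_irrefl _)
          simp [hg, hρ]
    rw [lintegral_congr_ae key,
      ← lintegral_indicator (hT hA),
      lintegral_triple' _ (hf.indicator (hT hA)),
      lintegral_pair'
        (fun p : ℝ × ℝ => ρ₀ p.1 * ∫⁻ x, q₁ (p.1, x) * q₂ (x, p.2) * A.indicator 1 (p, x))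
        (by
          refine (hρ₀.comp measurable_fst).mul ?_
          exact Measurable.lintegral_prod_right'
            (f := fun z : (ℝ × ℝ) × ℝ =>
              q₁ (z.1.1, z.2) * q₂ (z.2, z.1.2) * A.indicator 1 (z.1, z.2))
            (((hq₁.comp (measurable_fst.fst.prodMk measurable_snd)).mul
              (hq₂.comp (measurable_snd.prodMk measurable_fst.snd))).mul
              ((measurable_one.indicator hA).comp (measurable_fst.prodMk measurable_snd))))]
    refine lintegral_congr fun x₀ => ?_
    have step1 : ∀ x xf : ℝ,
        ((fun r : ℝ × ℝ × ℝ => ((r.1, r.2.2), r.2.1)) ⁻¹' A).indicator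
          (fun r : ℝ × ℝ × ℝ => ρ₀ r.1 * q₁ (r.1, r.2.1) * q₂ (r.2.1, r.2.2)) (x₀, x, xf)
        = ρ₀ x₀ * (q₁ (x₀, x) * q₂ (x, xf) * A.indicator 1 ((x₀, xf), x)) := by
      intro x xf
      by_cases h : ((x₀, xf), x) ∈ A
      · simp [Set.indicator_apply, h, mul_assoc]
      · simp [Set.indicator_apply, h]
    calc ∫⁻ x, ∫⁻ xf,
        ((fun r : ℝ × ℝ × ℝ => ((r.1, r.2.2), r.2.1)) ⁻¹' A).indicator
          (fun r : ℝ × ℝ × ℝ => ρ₀ r.1 * q₁ (r.1, r.2.1) * q₂ (r.2.1, r.2.2)) (x₀, x, xf)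
        = ∫⁻ x, ∫⁻ xf, ρ₀ x₀ * (q₁ (x₀, x) * q₂ (x, xf) * A.indicator 1 ((x₀, xf), x)) := by
          exact lintegral_congr fun x => lintegral_congr fun xf => step1 x xf
      _ = ∫⁻ xf, ∫⁻ x, ρ₀ x₀ * (q₁ (x₀, x) * q₂ (x, xf) * A.indicator 1 ((x₀, xf), x)) := by
          refine lintegral_lintegral_swap ?_
          exact (measurable_const.mul
            (((hq₁.comp (measurable_const.prodMk measurable_fst)).mul
              (hq₂.comp (measurable_fst.prodMk measurable_snd))).mul
              ((measurable_one.indicator hA).comp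
                ((measurable_const.prodMk measurable_snd).prodMk measurable_fst)))).aemeasurable
      _ = ∫⁻ xf, ρ₀ x₀ * ∫⁻ x, q₁ (x₀, x) * q₂ (x, xf) * A.indicator 1 ((x₀, xf), x) := by
          refine lintegral_congr fun xf => ?_
          have hm : Measurable fun x : ℝ =>
              q₁ (x₀, x) * q₂ (x, xf) * A.indicator 1 ((x₀, xf), x) := by
            exact ((hq₁.comp (measurable_const.prodMk measurable_id)).mul
              (hq₂.comp (measurable_id.prodMk measurable_const))).mul
              ((measurable_one.indicator hA).comp (measurable_const.prodMk measurable_id))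
          rw [lintegral_const_mul _ hm]
  -- conclusion
  have hcd := condDistrib_ae_eq_of_measure_eq_compProd_of_measurable hXZ hY (κ := κ) hcomp
  filter_upwards [h_ae_s, hcd] with p hp hcdp
  refine ⟨hp.1, hp.2, ?_⟩
  rw [hcdp, hκ_on_s p hp]
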